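/- For any nonempty bounded set F ⊆ ℝ^d and θ ∈ (0,1), the Assouad spectrum satisfies dim_A^θ F ≤ (upper box dimension of F)/(1−θ). -/

import Mathlib

open Filter MeasureTheory
open scoped Topology ENNReal

/-- `coverN E r` is the smallest number of sets of diameter at most `r` needed to cover `E`. -/
noncomputable def coverN {X : Type*} [PseudoMetricSpace X] (E : Set X) (r : ℝ) : ℕ :=
  sInf {n : ℕ | ∃ s : Finset (Set X),
    s.card = n ∧ (∀ U ∈ s, Metric.diam U ≤ r) ∧ E ⊆ ⋃ U ∈ s, U}

/-- The Assouad spectrum of a set at parameter `θ`. -/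
noncomputable def assouadSpectrum {X : Type*} [PseudoMetricSpace X] (F : Set X) (θ : ℝ) : ℝ :=
  sInf {α : ℝ | 0 ≤ α ∧ ∃ C : ℝ, 0 < C ∧ ∀ x ∈ F, ∀ r : ℝ, 0 < r → r < 1 →
    (coverN (Metric.closedBall x (r ^ θ) ∩ F) r : ℝ) ≤ C * (r ^ θ / r) ^ α}

/-- The upper box dimension of a set. -/
noncomputable def upperBoxDim {X : Type*} [PseudoMetricSpace X] (F : Set X) : ℝ :=
  Filter.limsup (fun r : ℝ => Real.log (coverN F r : ℝ) / (-Real.log r))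
    (nhdsWithin (0 : ℝ) (Set.Ioi 0))

namespace AssouadAux

variable {X : Type*} [PseudoMetricSpace X]

/-- The set of achievable cover cardinalities. -/
def covSet (E : Set X) (r : ℝ) : Set ℕ :=
  {n : ℕ | ∃ s : Finset (Set X),
    s.card = n ∧ (∀ U ∈ s, Metric.diam U ≤ r) ∧ E ⊆ ⋃ U ∈ s, U}

lemma coverN_eq (E : Set X) (r : ℝ) : coverN E r = sInf (covSet E r) := rfl

lemma coverN_le_card {E : Set X} {r : ℝ} {s : Finset (Set X)}
    (hd : ∀ U ∈ s, Metric.diam U ≤ r) (hc : E ⊆ ⋃ U ∈ s, U) : coverN E r ≤ s.card :=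
  Nat.sInf_le ⟨s, rfl, hd, hc⟩

lemma coverN_le_coverN {E E' : Set X} (hEE' : E ⊆ E') {r r' : ℝ} (hrr' : r' ≤ r)
    (hne : (covSet E' r').Nonempty) : coverN E r ≤ coverN E' r' := by
  obtain ⟨s, hcard, hd, hc⟩ := Nat.sInf_mem hne
  calc coverN E r ≤ s.card :=
        coverN_le_card (fun U hU => (hd U hU).trans hrr') (hEE'.trans hc)
    _ = coverN E' r' := hcard

lemma one_le_coverN {E : Set X} {r : ℝ} (hE : E.Nonempty) (hne : (covSet E r).Nonempty) :
    1 ≤ coverN E r := by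
  by_contra h
  push_neg at h
  have h0 : coverN E r = 0 := Nat.lt_one_iff.mp h
  have hmem : (0 : ℕ) ∈ covSet E r := by
    rw [← h0, coverN_eq]; exact Nat.sInf_mem hne
  obtain ⟨s, hcard, _, hc⟩ := hmem
  rw [Finset.card_eq_zero] at hcard
  subst hcard
  obtain ⟨x, hx⟩ := hE
  simpa using hc hx

/-- Quantitative grid covering of a bounded set in Euclidean space. -/
lemma grid (d : ℕ) (F : Set (EuclideanSpace ℝ (Fin d))) {R : ℝ} (hR : 0 ≤ R)
    (hFR : F ⊆ Metric.closedBall 0 R) {r : ℝ} (hr : 0 < r) :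
    ∃ s : Finset (Set (EuclideanSpace ℝ (Fin d))),
      (∀ U ∈ s, Metric.diam U ≤ r) ∧ (F ⊆ ⋃ U ∈ s, U) ∧
      s.card ≤ (2 * ⌈R * (d + 1) / r⌉₊ + 1) ^ d := by
  classical
  have hd1 : (0 : ℝ) < (d : ℝ) + 1 := by positivity
  set ε : ℝ := r / ((d : ℝ) + 1) with hεdef
  have hεpos : 0 < ε := by positivity
  set m : ℕ := ⌈R * ((d : ℝ) + 1) / r⌉₊ with hmdef
  set cell : (Fin d → ℤ) → Set (EuclideanSpace ℝ (Fin d)) :=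
    fun k => {x | ∀ i, x i ∈ Set.Icc ((k i : ℝ) * ε) ((k i : ℝ) * ε + ε)} with hcelldef
  refine ⟨(Fintype.piFinset fun _ : Fin d => Finset.Icc (-(m : ℤ)) (m : ℤ)).image cell,
    ?_, ?_, ?_⟩
  · -- diameter bound
    intro U hU
    simp only [Finset.mem_image] at hU
    obtain ⟨k, _, rfl⟩ := hU
    apply Metric.diam_le_of_forall_dist_le hr.le
    intro x hx y hy
    rw [EuclideanSpace.dist_eq]
    have hsum : ∑ i, dist (x i) (y i) ^ 2 ≤ (d : ℝ) * ε ^ 2 := by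
      have : ∀ i ∈ Finset.univ (α := Fin d), dist (x i) (y i) ^ 2 ≤ ε ^ 2 := by
        intro i _
        have hxi := hx i
        have hyi := hy i
        simp only [Set.mem_Icc] at hxi hyi
        have habs : |x i - y i| ≤ ε := by
          rw [abs_le]; constructor <;> linarith [hxi.1, hxi.2, hyi.1, hyi.2]
        calc dist (x i) (y i) ^ 2 = |x i - y i| ^ 2 := by rw [Real.dist_eq]
          _ ≤ ε ^ 2 := pow_le_pow_left₀ (abs_nonneg _) habs 2
      calc ∑ i, dist (x i) (y i) ^ 2 ≤ ∑ _i : Fin d, ε ^ 2 := Finset.sum_le_sum this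
        _ = (d : ℝ) * ε ^ 2 := by simp [mul_comm]
    have h2 : (d : ℝ) * ε ^ 2 ≤ r ^ 2 := by
      have hr_eq : r = ((d : ℝ) + 1) * ε := by
        rw [hεdef]; field_simp
      rw [hr_eq]
      have : (d : ℝ) ≤ ((d : ℝ) + 1) ^ 2 := by nlinarith [Nat.cast_nonneg (α := ℝ) d]
      nlinarith [sq_nonneg ε]
    calc Real.sqrt (∑ i, dist (x i) (y i) ^ 2) ≤ Real.sqrt (r ^ 2) :=
          Real.sqrt_le_sqrt (hsum.trans h2)
      _ = r := Real.sqrt_sq hr.le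
  · -- coverage
    intro x hx
    have hxR : ‖x‖ ≤ R := by
      have := hFR hx
      rwa [Metric.mem_closedBall, dist_zero_right] at this
    have hcoord : ∀ i, |x i| ≤ R := by
      intro i
      refine le_trans ?_ hxR
      rw [EuclideanSpace.norm_eq]
      have h1 : ‖x i‖ ^ 2 ≤ ∑ j, ‖x j‖ ^ 2 :=
        Finset.single_le_sum (f := fun j => ‖x j‖ ^ 2) (fun j _ => sq_nonneg _)
          (Finset.mem_univ i)
      calc |x i| = Real.sqrt (‖x i‖ ^ 2) := by
            rw [Real.sqrt_sq_eq_abs, Real.norm_eq_abs, abs_abs]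
        _ ≤ Real.sqrt (∑ j, ‖x j‖ ^ 2) := Real.sqrt_le_sqrt h1
    set k : Fin d → ℤ := fun i => ⌊x i / ε⌋ with hkdef
    have hRε : R / ε = R * ((d : ℝ) + 1) / r := by
      rw [hεdef]; field_simp
    have hRεm : R / ε ≤ (m : ℝ) := by rw [hRε]; exact Nat.le_ceil _
    have hkmem : k ∈ Fintype.piFinset fun _ : Fin d => Finset.Icc (-(m : ℤ)) (m : ℤ) := by
      rw [Fintype.mem_piFinset]
      intro i
      rw [Finset.mem_Icc]
      have h1 : x i / ε ≤ R / ε :=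
        div_le_div_of_nonneg_right (le_trans (le_abs_self _) (hcoord i)) hεpos.le
      have h2 : -(R / ε) ≤ x i / ε := by
        rw [← neg_div]
        exact div_le_div_of_nonneg_right
          (by linarith [neg_abs_le (x i), hcoord i]) hεpos.le
      constructor
      · rw [Int.le_floor]
        push_cast
        linarith
      · have : (k i : ℝ) ≤ x i / ε := Int.floor_le _
        have : (k i : ℝ) ≤ (m : ℝ) := le_trans this (h1.trans hRεm)
        exact_mod_cast this
    refine Set.mem_iUnion₂.mpr ⟨cell k, ?_, ?_⟩
    · exact Finset.mem_coe.mpr (Finset.mem_image_of_mem cell hkmem)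
    · intro i
      constructor
      · have h := Int.floor_le (x i / ε)
        calc (k i : ℝ) * ε ≤ (x i / ε) * ε := by
              apply mul_le_mul_of_nonneg_right h hεpos.le
          _ = x i := div_mul_cancel₀ _ hεpos.ne'
      · have h := (Int.lt_floor_add_one (x i / ε)).le
        calc x i = (x i / ε) * ε := (div_mul_cancel₀ _ hεpos.ne').symm
          _ ≤ ((k i : ℝ) + 1) * ε := by
              apply mul_le_mul_of_nonneg_right h hεpos.le
          _ = (k i : ℝ) * ε + ε := by ring
  · -- cardinality
    refine le_trans Finset.card_image_le ?_
    rw [Fintype.card_piFinset]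
    have hIcc : (Finset.Icc (-(m : ℤ)) (m : ℤ)).card = 2 * m + 1 := by
      rw [Int.card_Icc]
      omega
    simp [hIcc]

lemma covSet_nonempty (d : ℕ) (F : Set (EuclideanSpace ℝ (Fin d)))
    (hbd : Bornology.IsBounded F) {r : ℝ} (hr : 0 < r) : (covSet F r).Nonempty := by
  obtain ⟨R₀, hFR₀⟩ := hbd.subset_closedBall 0
  have hFR : F ⊆ Metric.closedBall 0 (max R₀ 0) :=
    hFR₀.trans (Metric.closedBall_subset_closedBall (le_max_left _ _))
  obtain ⟨s, hds, hc, _⟩ := grid d F (le_max_right R₀ 0) hFR hr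
  exact ⟨s.card, s, rfl, hds, hc⟩

/-- The eventual upper bound `d + 1` for the box-counting quotient. -/
lemma eventually_le_bound (d : ℕ) (F : Set (EuclideanSpace ℝ (Fin d))) (hne : F.Nonempty)
    (hbd : Bornology.IsBounded F) :
    ∀ᶠ r in nhdsWithin (0 : ℝ) (Set.Ioi 0),
      Real.log (coverN F r : ℝ) / (-Real.log r) ≤ (d : ℝ) + 1 := by
  obtain ⟨R₀, hFR₀⟩ := hbd.subset_closedBall 0
  set R : ℝ := max R₀ 0 with hRdef
  have hR : 0 ≤ R := le_max_right _ _
  have hFR : F ⊆ Metric.closedBall 0 R :=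
    hFR₀.trans (Metric.closedBall_subset_closedBall (le_max_left _ _))
  set A : ℝ := R * ((d : ℝ) + 1) with hAdef
  have hA : 0 ≤ A := by positivity
  set B0 : ℝ := 2 * A + 3 with hB0def
  have hB0_1 : 1 ≤ B0 := by simp only [hB0def]; linarith
  have hlogB0 : 0 ≤ Real.log B0 := Real.log_nonneg hB0_1
  set δ : ℝ := Real.exp (-((d : ℝ) * Real.log B0 + 1)) with hδdef
  have hδpos : 0 < δ := Real.exp_pos _
  filter_upwards [Ioo_mem_nhdsGT_of_mem (Set.mem_Ico.mpr ⟨le_refl (0 : ℝ), hδpos⟩)] with r hr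
  obtain ⟨hr0, hrδ⟩ := hr
  have hlog : (d : ℝ) * Real.log B0 + 1 < -Real.log r := by
    have h := Real.log_lt_log hr0 hrδ
    rw [hδdef, Real.log_exp] at h
    linarith
  have hlogpos : 0 < -Real.log r := by
    have h1 : (0 : ℝ) ≤ (d : ℝ) * Real.log B0 + 1 := by positivity
    linarith
  obtain ⟨s, hds, hc, hcard⟩ := grid d F hR hFR hr0
  have hcovne : (covSet F r).Nonempty := ⟨s.card, s, rfl, hds, hc⟩
  have hN1 : 1 ≤ coverN F r := one_le_coverN hne hcovne
  have hN1' : (1 : ℝ) ≤ (coverN F r : ℝ) := by exact_mod_cast hN1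
  set m : ℕ := ⌈R * ((d : ℝ) + 1) / r⌉₊ with hmdef
  have hr1 : r ≤ 1 := by
    refine le_of_lt (lt_of_lt_of_le hrδ ?_)
    rw [hδdef]
    apply Real.exp_le_one_iff.mpr
    simp only [neg_nonpos]
    positivity
  have hm2 : ((2 * m + 1 : ℕ) : ℝ) ≤ B0 / r := by
    have hceil : (m : ℝ) < A / r + 1 := by
      rw [hmdef, ← hAdef]
      exact Nat.ceil_lt_add_one (by positivity)
    have h3r : (3 : ℝ) ≤ 3 / r := by
      rw [le_div_iff₀ hr0]; linarith
    have hsplit : B0 / r = 2 * A / r + 3 / r := by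
      rw [hB0def]; ring
    push_cast
    rw [hsplit]
    have : 2 * (m : ℝ) ≤ 2 * A / r + 2 := by
      rw [mul_div_assoc]; linarith
    linarith
  have hNle : (coverN F r : ℝ) ≤ (B0 / r) ^ d := by
    have h1 : coverN F r ≤ (2 * m + 1) ^ d := (coverN_le_card hds hc).trans hcard
    have h1' : (coverN F r : ℝ) ≤ ((2 * m + 1 : ℕ) : ℝ) ^ d := by exact_mod_cast h1
    refine h1'.trans ?_
    apply pow_le_pow_left₀ (by positivity) hm2
  have hB0r : 0 < B0 / r := by positivity
  have hlogN : Real.log (coverN F r : ℝ) ≤ (d : ℝ) * (Real.log B0 - Real.log r) := by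
    calc Real.log (coverN F r : ℝ) ≤ Real.log ((B0 / r) ^ d) :=
          Real.log_le_log (by linarith) hNle
      _ = (d : ℝ) * Real.log (B0 / r) := by rw [Real.log_pow]
      _ = (d : ℝ) * (Real.log B0 - Real.log r) := by
          rw [Real.log_div (by linarith) hr0.ne']
  rw [div_le_iff₀ hlogpos]
  have hd0 : (0 : ℝ) ≤ (d : ℝ) := Nat.cast_nonneg d
  have : (d : ℝ) * Real.log B0 ≤ -Real.log r := by linarith
  nlinarith [hlogN, hlogpos]

end AssouadAux

/-- For any nonempty bounded `F ⊆ ℝ^d` and `θ ∈ (0,1)`,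
`dim_A^θ F ≤ (upper box dimension of F)/(1-θ)`. -/
theorem assouadSpectrum_le_upperBoxDim_div (d : ℕ) (F : Set (EuclideanSpace ℝ (Fin d)))
    (hne : F.Nonempty) (hbd : Bornology.IsBounded F) (θ : ℝ) (hθ : θ ∈ Set.Ioo (0 : ℝ) 1) :
    assouadSpectrum F θ ≤ upperBoxDim F / (1 - θ) := by
  open AssouadAux in
  obtain ⟨hθ0, hθ1⟩ := hθ
  have h1θ : 0 < 1 - θ := by linarith
  set f : ℝ → ℝ := fun r => Real.log (coverN F r : ℝ) / (-Real.log r) with hfdef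
  have hUB : upperBoxDim F = Filter.limsup f (nhdsWithin (0 : ℝ) (Set.Ioi 0)) := rfl
  have hbound := AssouadAux.eventually_le_bound d F hne hbd
  have hBdd : IsBoundedUnder (· ≤ ·) (nhdsWithin (0 : ℝ) (Set.Ioi 0)) f :=
    ⟨(d : ℝ) + 1, hbound⟩
  have hcov : ∀ r : ℝ, 0 < r → (AssouadAux.covSet F r).Nonempty := fun r hr =>
    AssouadAux.covSet_nonempty d F hbd hr
  have hN1 : ∀ r : ℝ, 0 < r → (1 : ℝ) ≤ (coverN F r : ℝ) := fun r hr => by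
    exact_mod_cast AssouadAux.one_le_coverN hne (hcov r hr)
  have hfnn : ∀ r : ℝ, 0 < r → r < 1 → 0 ≤ f r := by
    intro r h0 h1
    apply div_nonneg
    · exact Real.log_nonneg (hN1 r h0)
    · simp only [neg_nonneg]
      exact Real.log_nonpos h0.le h1.le
  have hB : 0 ≤ upperBoxDim F := by
    rw [hUB]
    refine Filter.le_limsup_of_frequently_le ?_ hBdd
    apply Filter.Eventually.frequently
    filter_upwards [Ioo_mem_nhdsGT_of_mem (Set.mem_Ico.mpr ⟨le_refl (0 : ℝ), one_pos⟩)]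
      with r hr
    exact hfnn r hr.1 hr.2
  apply le_of_forall_pos_le_add
  intro ε hε
  set s : ℝ := upperBoxDim F + ε * (1 - θ) with hsdef
  have hlt : upperBoxDim F < s := by nlinarith
  set α : ℝ := s / (1 - θ) with hαdef
  have hαval : α = upperBoxDim F / (1 - θ) + ε := by
    rw [hαdef, hsdef]
    field_simp
  have hs0 : 0 ≤ s := by nlinarith
  have hα0 : 0 ≤ α := div_nonneg hs0 h1θ.le
  have hev : ∀ᶠ r in nhdsWithin (0 : ℝ) (Set.Ioi 0), f r < s := by
    apply Filter.eventually_lt_of_limsup_lt _ hBdd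
    rw [← hUB]; exact hlt
  have hev2 : {r : ℝ | f r < s ∧ r < 1} ∈ nhdsWithin (0 : ℝ) (Set.Ioi 0) := by
    filter_upwards [hev,
      Ioo_mem_nhdsGT_of_mem (Set.mem_Ico.mpr ⟨le_refl (0 : ℝ), one_pos⟩)] with r h1 h2
    exact ⟨h1, h2.2⟩
  rw [mem_nhdsGT_iff_exists_Ioo_subset] at hev2
  obtain ⟨δ, hδmem, hsub⟩ := hev2
  have hδpos : 0 < δ := hδmem
  set C : ℝ := max ((coverN F δ : ℕ) : ℝ) 1 with hCdef
  have hC1 : (1 : ℝ) ≤ C := le_max_right _ _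
  have hCpos : 0 < C := lt_of_lt_of_le one_pos hC1
  have hmain : ∀ x ∈ F, ∀ r : ℝ, 0 < r → r < 1 →
      (coverN (Metric.closedBall x (r ^ θ) ∩ F) r : ℝ) ≤ C * (r ^ θ / r) ^ α := by
    intro x hx r hr0 hr1
    have hbase : r ^ θ / r = r ^ (θ - 1) := by
      rw [Real.rpow_sub hr0, Real.rpow_one]
    have hbase_nonneg : 0 ≤ r ^ θ / r := by
      rw [hbase]; exact Real.rpow_nonneg hr0.le _
    rcases lt_or_ge r δ with hcase | hcase
    · -- small r : use the box-dimension bound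
      obtain ⟨hfr, _⟩ := hsub ⟨hr0, hcase⟩
      have hlogr : 0 < -Real.log r := by
        have := Real.log_neg hr0 hr1
        linarith
      have hkey : Real.log (coverN F r : ℝ) < s * (-Real.log r) :=
        (div_lt_iff₀ hlogr).mp hfr
      have hNr1 : (1 : ℝ) ≤ (coverN F r : ℝ) := hN1 r hr0
      have hNle : (coverN F r : ℝ) ≤ r ^ (-s) := by
        rw [Real.rpow_def_of_pos hr0]
        calc (coverN F r : ℝ) = Real.exp (Real.log (coverN F r : ℝ)) :=
              (Real.exp_log (by linarith)).symm
          _ ≤ Real.exp (Real.log r * -s) := Real.exp_le_exp.mpr (by nlinarith)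
      have hmono : (coverN (Metric.closedBall x (r ^ θ) ∩ F) r : ℝ) ≤ (coverN F r : ℝ) := by
        exact_mod_cast AssouadAux.coverN_le_coverN Set.inter_subset_right le_rfl (hcov r hr0)
      have heq : (r ^ θ / r) ^ α = r ^ (-s) := by
        rw [hbase, ← Real.rpow_mul hr0.le]
        congr 1
        have hne' : (1 : ℝ) - θ ≠ 0 := h1θ.ne'
        rw [hαdef]
        field_simp
        ring
      calc (coverN (Metric.closedBall x (r ^ θ) ∩ F) r : ℝ) ≤ r ^ (-s) := hmono.trans hNle
        _ = (r ^ θ / r) ^ α := heq.symm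
        _ ≤ C * (r ^ θ / r) ^ α :=
            le_mul_of_one_le_left (Real.rpow_nonneg hbase_nonneg _) hC1
    · -- large r : use a constant bound
      have h1 : coverN (Metric.closedBall x (r ^ θ) ∩ F) r ≤ coverN F δ :=
        AssouadAux.coverN_le_coverN Set.inter_subset_right hcase (hcov δ hδpos)
      have h1' : (coverN (Metric.closedBall x (r ^ θ) ∩ F) r : ℝ) ≤ C := by
        refine le_trans ?_ (le_max_left _ _)
        exact_mod_cast h1
      refine h1'.trans ?_
      have hge1 : (1 : ℝ) ≤ (r ^ θ / r) ^ α := by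
        apply Real.one_le_rpow _ hα0
        rw [hbase]
        exact Real.one_le_rpow_of_pos_of_le_one_of_nonpos hr0 hr1.le (by linarith)
      nlinarith
  have hmem : α ∈ {α : ℝ | 0 ≤ α ∧ ∃ C : ℝ, 0 < C ∧ ∀ x ∈ F, ∀ r : ℝ, 0 < r → r < 1 →
      (coverN (Metric.closedBall x (r ^ θ) ∩ F) r : ℝ) ≤ C * (r ^ θ / r) ^ α} :=
    ⟨hα0, C, hCpos, hmain⟩
  have hbdd : BddBelow {α : ℝ | 0 ≤ α ∧ ∃ C : ℝ, 0 < C ∧ ∀ x ∈ F, ∀ r : ℝ, 0 < r → r < 1 →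
      (coverN (Metric.closedBall x (r ^ θ) ∩ F) r : ℝ) ≤ C * (r ^ θ / r) ^ α} :=
    ⟨0, fun a ha => ha.1⟩
  calc assouadSpectrum F θ ≤ α := csInf_le hbdd hmem
    _ = upperBoxDim F / (1 - θ) + ε := hαval
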